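/- Let H ∈ (0, 1/2), α ∈ (0, H), and let α_H be a fixed nonzero constant. Then there exists a constant C > 0, depending only on H, α and α_H, such that for every continuous function g_B : [0,1] → ℝⁿ, the function g_w : (0,∞) → ℝⁿ defined by g_w(t) = α_H (1/2 − H) ∫₀^{min(t,1)} (t − s)^{−1/2−H} g_B(s) ds satisfies ‖g_w‖_α ≤ C · sup_{t ∈ [0,1]} ‖g_B(t)‖. -/

import Mathlib

open MeasureTheory Set
open scoped ENNReal

/-- The squared weighted norm `‖g‖_α² = ∫₀^∞ (1+t)^{2α} ‖g(t)‖² dt`, as an extended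
nonnegative real. -/
noncomputable def alphaNormSq {E : Type*} [NormedAddCommGroup E] (α : ℝ) (g : ℝ → E) :
    ℝ≥0∞ :=
  ∫⁻ t in Set.Ioi (0 : ℝ), ENNReal.ofReal ((1 + t) ^ (2 * α) * ‖g t‖ ^ 2)

set_option maxHeartbeats 1000000 in
/-- Lemma 5.2 (case `H < 1/2`): for continuous `g_B : [0,1] → ℝⁿ`, the function
`g_w(t) = α_H (1/2-H) ∫₀^{min(t,1)} (t-s)^{-1/2-H} g_B(s) ds` satisfies
`‖g_w‖_α ≤ C sup_{t ∈ [0,1]} ‖g_B(t)‖`, with `C` depending only on `H`, `α`, `α_H`. -/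
theorem stmt14 (n : ℕ) (H α αH : ℝ) (hH : H ∈ Set.Ioo (0 : ℝ) (1 / 2))
    (hα : α ∈ Set.Ioo (0 : ℝ) H) (hαH : αH ≠ 0) :
    ∃ C : ℝ, 0 < C ∧ ∀ gB : ℝ → EuclideanSpace ℝ (Fin n),
      ContinuousOn gB (Set.Icc 0 1) →
      (alphaNormSq α fun t : ℝ =>
          (αH * ((1 : ℝ) / 2 - H)) •
            ∫ s in (0 : ℝ)..(min t 1), ((t - s) ^ (-(1 : ℝ) / 2 - H)) • gB s) ^
          ((1 : ℝ) / 2) ≤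
        ENNReal.ofReal (C * ⨆ t : Set.Icc (0 : ℝ) 1, ‖gB t‖) := by
  obtain ⟨hH0, hH2⟩ := hH
  obtain ⟨hα0, hαH'⟩ := hα
  set q : ℝ := (1 : ℝ) / 2 - H with hqdef
  set p : ℝ := -(1 : ℝ) / 2 - H with hpdef
  have hq0 : 0 < q := by rw [hqdef]; linarith
  have hq1 : q ≤ 1 := by rw [hqdef]; linarith
  have hp1 : (-1 : ℝ) < p := by rw [hpdef]; linarith
  have hpq : p + 1 = q := by rw [hpdef, hqdef]; ring
  have hpneg : p < 0 := by rw [hpdef]; linarith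
  have hαH0 : 0 < |αH| := abs_pos.2 hαH
  have h2p : (0 : ℝ) < (2 : ℝ) ^ (-p) := Real.rpow_pos_of_pos two_pos _
  set D : ℝ := |αH| * (2 + q * (2 : ℝ) ^ (-p)) with hDdef
  have hD0 : 0 < D := by
    rw [hDdef]
    exact mul_pos hαH0 (by nlinarith [mul_pos hq0 h2p])
  set r : ℝ := 2 * α + 2 * p with hrdef
  have hr : r < -1 := by rw [hrdef, hpdef]; linarith
  set W : ℝ → ℝ := fun t => if t ≤ 2 then (3 : ℝ) ^ (2 * α) else (2 : ℝ) ^ (2 * α) * t ^ r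
    with hWdef
  have hWnn : ∀ t ∈ Ioi (0 : ℝ), 0 ≤ W t := by
    intro t ht
    rw [hWdef]
    dsimp only
    split
    · positivity
    · exact mul_nonneg (Real.rpow_nonneg (by norm_num) _)
        (Real.rpow_nonneg (le_of_lt ht) _)
  have hWmeas : Measurable W := by
    apply Measurable.ite (measurableSet_le measurable_id measurable_const) measurable_const
    fun_prop
  have hWint : IntegrableOn W (Ioi (0 : ℝ)) := by
    have h1 : IntegrableOn W (Ioc (0 : ℝ) 2) := by
      have hc : IntegrableOn (fun _ : ℝ => (3 : ℝ) ^ (2 * α)) (Ioc (0 : ℝ) 2) :=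
        integrableOn_const measure_Ioc_lt_top.ne
      refine hc.congr_fun ?_ measurableSet_Ioc
      intro t ht
      simp only [hWdef]
      rw [if_pos ht.2]
    have h2 : IntegrableOn W (Ioi (2 : ℝ)) := by
      have hc : IntegrableOn (fun t : ℝ => (2 : ℝ) ^ (2 * α) * t ^ r) (Ioi (2 : ℝ)) :=
        (integrableOn_Ioi_rpow_of_lt hr two_pos).const_mul ((2 : ℝ) ^ (2 * α))
      refine hc.congr_fun ?_ measurableSet_Ioi
      intro t ht
      simp only [hWdef]
      rw [if_neg (not_le.2 ht)]
    have := h1.union h2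
    rwa [Ioc_union_Ioi_eq_Ioi (by norm_num : (0 : ℝ) ≤ 2)] at this
  set I : ℝ := ∫ t in Ioi (0 : ℝ), W t with hIdef
  have hI0 : 0 ≤ I := setIntegral_nonneg measurableSet_Ioi hWnn
  refine ⟨D * Real.sqrt I + 1, by positivity, ?_⟩
  intro gB hgB
  obtain ⟨M0, hM0b⟩ := isCompact_Icc.exists_bound_of_continuousOn hgB
  set M : ℝ := ⨆ t : Icc (0 : ℝ) 1, ‖gB t‖ with hMdef
  have hbdd : BddAbove (Set.range fun t : Icc (0 : ℝ) 1 => ‖gB t‖) := by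
    refine ⟨M0, ?_⟩
    rintro x ⟨t, rfl⟩
    exact hM0b t t.2
  have hM : ∀ s ∈ Icc (0 : ℝ) 1, ‖gB s‖ ≤ M := fun s hs => le_ciSup hbdd ⟨s, hs⟩
  have hM0 : 0 ≤ M := (norm_nonneg _).trans (hM 0 ⟨le_refl 0, zero_le_one⟩)
  -- pointwise bound
  have key : ∀ t ∈ Ioi (0 : ℝ),
      ‖(αH * q) • ∫ s in (0 : ℝ)..(min t 1), ((t - s) ^ p) • gB s‖ ≤
        D * M * (if t ≤ 2 then 1 else t ^ p) := by
    intro t ht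
    have ht0 : (0 : ℝ) < t := ht
    set u : ℝ := min t 1 with hudef
    have hu0 : (0 : ℝ) ≤ u := le_min ht0.le zero_le_one
    have hut : u ≤ t := min_le_left _ _
    have hu1 : u ≤ 1 := min_le_right _ _
    have hker : IntervalIntegrable (fun s => (t - s) ^ p) volume 0 u := by
      have h := (intervalIntegral.intervalIntegrable_rpow' (a := t) (b := t - u)
        hp1).comp_sub_left t
      simpa using h
    have hkerM : IntervalIntegrable (fun s => M * (t - s) ^ p) volume 0 u := hker.const_mul M
    have hnn : ∀ s ∈ Set.Ioc (0 : ℝ) u, ‖((t - s) ^ p) • gB s‖ ≤ M * (t - s) ^ p := by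
      intro s hs
      have hts : (0 : ℝ) ≤ t - s := by
        have := hs.2
        linarith
      have h1 : 0 ≤ (t - s) ^ p := Real.rpow_nonneg hts _
      rw [norm_smul, Real.norm_eq_abs, abs_of_nonneg h1]
      calc (t - s) ^ p * ‖gB s‖ ≤ (t - s) ^ p * M :=
            mul_le_mul_of_nonneg_left (hM s ⟨hs.1.le, hs.2.trans hu1⟩) h1
        _ = M * (t - s) ^ p := mul_comm _ _
    have hstep1 : ‖∫ s in (0 : ℝ)..u, ((t - s) ^ p) • gB s‖ ≤
        M * ∫ s in (0 : ℝ)..u, (t - s) ^ p := by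
      refine le_trans (intervalIntegral.norm_integral_le_integral_norm hu0) ?_
      rw [← intervalIntegral.integral_const_mul]
      rw [intervalIntegral.integral_of_le hu0, intervalIntegral.integral_of_le hu0]
      refine integral_mono_of_nonneg (ae_of_all _ fun s => norm_nonneg _)
        ((intervalIntegrable_iff_integrableOn_Ioc_of_le hu0).1 hkerM) ?_
      filter_upwards [ae_restrict_mem measurableSet_Ioc] with s hs using hnn s hs
    have hKval : (∫ s in (0 : ℝ)..u, (t - s) ^ p) = (t ^ q - (t - u) ^ q) / q := by
      have h := intervalIntegral.integral_comp_sub_left (a := 0) (b := u)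
        (fun x => x ^ p) t
      rw [h, sub_zero, integral_rpow (Or.inl hp1), hpq]
    have hsc : ‖(αH * q) • ∫ s in (0 : ℝ)..u, ((t - s) ^ p) • gB s‖ =
        |αH| * q * ‖∫ s in (0 : ℝ)..u, ((t - s) ^ p) • gB s‖ := by
      rw [norm_smul, Real.norm_eq_abs, abs_mul, abs_of_pos hq0]
    by_cases hcase : t ≤ 2
    · rw [if_pos hcase]
      have hK1 : (∫ s in (0 : ℝ)..u, (t - s) ^ p) ≤ 2 / q := by
        rw [hKval]
        have h1 : 0 ≤ (t - u) ^ q := Real.rpow_nonneg (by linarith) _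
        have h2 : t ^ q ≤ 2 := by
          calc t ^ q ≤ 2 ^ q := Real.rpow_le_rpow ht0.le hcase hq0.le
            _ ≤ 2 ^ (1 : ℝ) := Real.rpow_le_rpow_of_exponent_le one_le_two hq1
            _ = 2 := Real.rpow_one 2
        rw [div_le_div_iff₀ hq0 hq0]
        exact mul_le_mul_of_nonneg_right (by linarith) hq0.le
      have h2D : 2 * |αH| ≤ D := by
        rw [hDdef]
        nlinarith [mul_nonneg hαH0.le (mul_nonneg hq0.le h2p.le)]
      rw [hsc]
      calc |αH| * q * ‖∫ s in (0 : ℝ)..u, ((t - s) ^ p) • gB s‖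
          ≤ |αH| * q * (M * (2 / q)) := by
            refine mul_le_mul_of_nonneg_left (hstep1.trans ?_) (by positivity)
            exact mul_le_mul_of_nonneg_left hK1 hM0
        _ = 2 * |αH| * M := by field_simp
        _ ≤ D * M * 1 := by
            rw [mul_one]
            exact mul_le_mul_of_nonneg_right h2D hM0
    · rw [if_neg hcase]
      push_neg at hcase
      have hu_eq : u = 1 := min_eq_right (by linarith)
      have hK2 : (∫ s in (0 : ℝ)..u, (t - s) ^ p) ≤ (t - 1) ^ p := by
        rw [hu_eq]
        have hker1 : IntervalIntegrable (fun s => (t - s) ^ p) volume 0 1 := hu_eq ▸ hker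
        calc (∫ s in (0 : ℝ)..1, (t - s) ^ p)
            ≤ ∫ _ in (0 : ℝ)..1, (t - 1) ^ p := by
              refine intervalIntegral.integral_mono_on zero_le_one hker1
                intervalIntegrable_const ?_
              intro s hs
              exact Real.rpow_le_rpow_of_nonpos (by linarith) (by linarith [hs.2]) hpneg.le
          _ = (t - 1) ^ p := by simp
      have hK3 : (t - 1) ^ p ≤ (2 : ℝ) ^ (-p) * t ^ p := by
        have hh : t / 2 ≤ t - 1 := by linarith
        calc (t - 1) ^ p ≤ (t / 2) ^ p :=
              Real.rpow_le_rpow_of_nonpos (by linarith) hh hpneg.le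
          _ = t ^ p / 2 ^ p := Real.div_rpow ht0.le (by norm_num) _
          _ = (2 : ℝ) ^ (-p) * t ^ p := by
              rw [Real.rpow_neg (by norm_num : (0:ℝ) ≤ 2)]
              field_simp
      have hcoef : |αH| * q * (2 : ℝ) ^ (-p) ≤ D := by
        rw [hDdef, mul_assoc]
        refine mul_le_mul_of_nonneg_left ?_ hαH0.le
        linarith
      rw [hsc]
      calc |αH| * q * ‖∫ s in (0 : ℝ)..u, ((t - s) ^ p) • gB s‖
          ≤ |αH| * q * (M * ((2 : ℝ) ^ (-p) * t ^ p)) := by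
            refine mul_le_mul_of_nonneg_left (hstep1.trans ?_) (by positivity)
            exact mul_le_mul_of_nonneg_left (hK2.trans hK3) hM0
        _ = (|αH| * q * (2 : ℝ) ^ (-p)) * (M * t ^ p) := by ring
        _ ≤ D * (M * t ^ p) := by
            refine mul_le_mul_of_nonneg_right hcoef
              (mul_nonneg hM0 (Real.rpow_nonneg ht0.le _))
        _ = D * M * t ^ p := by ring
  -- main lintegral bound
  have hmain : (alphaNormSq α fun t : ℝ =>
      (αH * q) • ∫ s in (0 : ℝ)..(min t 1), ((t - s) ^ p) • gB s) ≤
      ENNReal.ofReal ((D * M) ^ 2 * I) := by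
    unfold alphaNormSq
    have hle : ∀ t ∈ Ioi (0 : ℝ),
        ENNReal.ofReal ((1 + t) ^ (2 * α) *
          ‖(αH * q) • ∫ s in (0 : ℝ)..(min t 1), ((t - s) ^ p) • gB s‖ ^ 2) ≤
        ENNReal.ofReal ((D * M) ^ 2 * W t) := by
      intro t ht
      have ht0 : (0 : ℝ) < t := ht
      apply ENNReal.ofReal_le_ofReal
      have hkey := key t ht
      have hnn2 : (0 : ℝ) ≤ ‖(αH * q) • ∫ s in (0 : ℝ)..(min t 1), ((t - s) ^ p) • gB s‖ :=
        norm_nonneg _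
      by_cases hc : t ≤ 2
      · rw [hWdef]
        dsimp only
        rw [if_pos hc]
        rw [if_pos hc, mul_one] at hkey
        have hA : (1 + t) ^ (2 * α) ≤ (3 : ℝ) ^ (2 * α) :=
          Real.rpow_le_rpow (by linarith) (by linarith) (by linarith)
        have hB : ‖(αH * q) • ∫ s in (0 : ℝ)..(min t 1), ((t - s) ^ p) • gB s‖ ^ 2 ≤
            (D * M) ^ 2 := pow_le_pow_left₀ hnn2 hkey 2
        calc (1 + t) ^ (2 * α) *
              ‖(αH * q) • ∫ s in (0 : ℝ)..(min t 1), ((t - s) ^ p) • gB s‖ ^ 2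
            ≤ (3 : ℝ) ^ (2 * α) * (D * M) ^ 2 :=
              mul_le_mul hA hB (by positivity) (by positivity)
          _ = (D * M) ^ 2 * (3 : ℝ) ^ (2 * α) := mul_comm _ _
      · rw [hWdef]
        dsimp only
        rw [if_neg hc]
        rw [if_neg hc] at hkey
        push_neg at hc
        have hA : (1 + t) ^ (2 * α) ≤ (2 : ℝ) ^ (2 * α) * t ^ (2 * α) := by
          calc (1 + t) ^ (2 * α) ≤ (2 * t) ^ (2 * α) :=
                Real.rpow_le_rpow (by linarith) (by linarith) (by linarith)
            _ = (2 : ℝ) ^ (2 * α) * t ^ (2 * α) := Real.mul_rpow (by norm_num) ht0.le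
        have htp : (t ^ p) ^ 2 = t ^ (2 * p) := by
          rw [← Real.rpow_natCast (t ^ p) 2, ← Real.rpow_mul ht0.le]
          norm_num
          ring_nf
        have hB : ‖(αH * q) • ∫ s in (0 : ℝ)..(min t 1), ((t - s) ^ p) • gB s‖ ^ 2 ≤
            (D * M) ^ 2 * t ^ (2 * p) := by
          calc ‖(αH * q) • ∫ s in (0 : ℝ)..(min t 1), ((t - s) ^ p) • gB s‖ ^ 2
              ≤ (D * M * t ^ p) ^ 2 := pow_le_pow_left₀ hnn2 hkey 2
            _ = (D * M) ^ 2 * t ^ (2 * p) := by rw [mul_pow, htp]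
        have hrw : t ^ (2 * α) * t ^ (2 * p) = t ^ r := by
          rw [hrdef, Real.rpow_add ht0]
        calc (1 + t) ^ (2 * α) *
              ‖(αH * q) • ∫ s in (0 : ℝ)..(min t 1), ((t - s) ^ p) • gB s‖ ^ 2
            ≤ ((2 : ℝ) ^ (2 * α) * t ^ (2 * α)) * ((D * M) ^ 2 * t ^ (2 * p)) :=
              mul_le_mul hA hB (by positivity) (by positivity)
          _ = (D * M) ^ 2 * ((2 : ℝ) ^ (2 * α) * (t ^ (2 * α) * t ^ (2 * p))) := by ring
          _ = (D * M) ^ 2 * ((2 : ℝ) ^ (2 * α) * t ^ r) := by rw [hrw]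
    calc (∫⁻ t in Ioi (0 : ℝ), ENNReal.ofReal ((1 + t) ^ (2 * α) *
            ‖(αH * q) • ∫ s in (0 : ℝ)..(min t 1), ((t - s) ^ p) • gB s‖ ^ 2))
        ≤ ∫⁻ t in Ioi (0 : ℝ), ENNReal.ofReal ((D * M) ^ 2 * W t) :=
          setLIntegral_mono (ENNReal.measurable_ofReal.comp (hWmeas.const_mul _)) hle
      _ = ENNReal.ofReal (∫ t in Ioi (0 : ℝ), (D * M) ^ 2 * W t) :=
          (ofReal_integral_eq_lintegral_ofReal (hWint.const_mul _) (by
            filter_upwards [ae_restrict_mem measurableSet_Ioi] with t ht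
            exact mul_nonneg (sq_nonneg _) (hWnn t ht))).symm
      _ = ENNReal.ofReal ((D * M) ^ 2 * I) := by rw [integral_const_mul]
  -- conclude
  set x : ℝ := D * M * Real.sqrt I with hxdef
  have hx0 : 0 ≤ x := by
    rw [hxdef]
    exact mul_nonneg (mul_nonneg hD0.le hM0) (Real.sqrt_nonneg _)
  have heq : (D * M) ^ 2 * I = x ^ 2 := by
    rw [hxdef, mul_pow (D * M) (Real.sqrt I) 2, Real.sq_sqrt hI0]
  have h1 : (alphaNormSq α fun t : ℝ =>
      (αH * q) • ∫ s in (0 : ℝ)..(min t 1), ((t - s) ^ p) • gB s) ^ ((1 : ℝ) / 2) ≤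
      (ENNReal.ofReal (x ^ 2)) ^ ((1 : ℝ) / 2) := by
    rw [← heq]
    exact ENNReal.rpow_le_rpow hmain (by norm_num)
  have h2 : (ENNReal.ofReal (x ^ 2)) ^ ((1 : ℝ) / 2) = ENNReal.ofReal x := by
    rw [ENNReal.ofReal_rpow_of_nonneg (sq_nonneg x) (by norm_num : (0:ℝ) ≤ 1 / 2)]
    congr 1
    rw [← Real.sqrt_eq_rpow, Real.sqrt_sq hx0]
  rw [h2] at h1
  refine h1.trans (ENNReal.ofReal_le_ofReal ?_)
  rw [hxdef]
  nlinarith [hM0, Real.sqrt_nonneg I, hD0.le, mul_nonneg hD0.le (Real.sqrt_nonneg I)]
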